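/- For every θ ≥ 1 the tie-broken win probability q_θ is strictly increasing in the reward difference: for all real d₁ < d₂, q_θ(d₁) < q_θ(d₂), where q_θ(d) = p_θ(d) + t_θ(d)/2 with p_θ(d) = 1/(1 + θ·exp(−d)) and t_θ(d) = (θ² − 1)·exp(d) / ((exp(d) + θ)·(θ·exp(d) + 1)). -/
import Mathlib


open Real

noncomputable def pBTT (θ d : ℝ) : ℝ := 1 / (1 + θ * Real.exp (-d))

noncomputable def tBTT (θ d : ℝ) : ℝ :=
  (θ ^ 2 - 1) * Real.exp d / ((Real.exp d + θ) * (θ * Real.exp d + 1))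

noncomputable def qBTT (θ d : ℝ) : ℝ := pBTT θ d + tBTT θ d / 2

noncomputable def logistic (x : ℝ) : ℝ := 1 / (1 + Real.exp (-x))

lemma qBTT_eq (θ : ℝ) (hθ : 1 ≤ θ) (d : ℝ) :
    qBTT θ d = Real.exp d * (2 * θ * Real.exp d + θ ^ 2 + 1) /
      (2 * ((Real.exp d + θ) * (θ * Real.exp d + 1))) := by
  have he : 0 < Real.exp d := Real.exp_pos d
  have hθ0 : 0 < θ := lt_of_lt_of_le one_pos hθ
  have h1 : (0:ℝ) < 1 + θ * Real.exp (-d) := by positivity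
  have h2 : (0:ℝ) < Real.exp d + θ := by positivity
  have h3 : (0:ℝ) < θ * Real.exp d + 1 := by positivity
  unfold qBTT pBTT tBTT
  rw [Real.exp_neg]
  field_simp
  ring

theorem qBTT_strictMono (θ : ℝ) (hθ : 1 ≤ θ) :
    ∀ d₁ d₂ : ℝ, d₁ < d₂ → qBTT θ d₁ < qBTT θ d₂ := by
  intro d₁ d₂ h
  have hθ0 : 0 < θ := lt_of_lt_of_le one_pos hθ
  have ha : 0 < Real.exp d₁ := Real.exp_pos d₁
  have hb : 0 < Real.exp d₂ := Real.exp_pos d₂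
  have hab : Real.exp d₁ < Real.exp d₂ := Real.exp_lt_exp.2 h
  rw [qBTT_eq θ hθ d₁, qBTT_eq θ hθ d₂]
  set a := Real.exp d₁
  set b := Real.exp d₂
  have hd1 : (0:ℝ) < 2 * ((a + θ) * (θ * a + 1)) := by positivity
  have hd2 : (0:ℝ) < 2 * ((b + θ) * (θ * b + 1)) := by positivity
  rw [div_lt_div_iff₀ hd1 hd2]
  nlinarith [mul_pos (mul_pos hθ0 (sub_pos.2 hab))
    (by positivity : (0:ℝ) < (θ^2+1) * (a*b) + 2*θ*(a+b) + (θ^2+1)),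
    mul_pos ha hb, sq_nonneg (a-b)]
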